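/- arXiv:1905.05658 — 2 statements merged into one kernel-verified Lean document; each statement's English description precedes it below -/
import Mathlib

section
/- Let $A$ be an $N\times N$ Hermitian positive semidefinite matrix with entries in $\frac{1}{m}\mathcal{O}_E$ for a positive integer $m$ and the ring of integers $\mathcal{O}_E$ of a finite Galois extension $E/\mathbb{Q}$, with $\|A\| \le b$ for some $b \ge 1$. Let $c$ be the lowest nonzero coefficient of the characteristic polynomial of $A$ (the product of the nonzero eigenvalues). Suppose for every $\tau \in \mathrm{Gal}(E/\mathbb{Q})$ the matrix $\tau(A)$ is also Hermitian positive semidefinite with norm at most $b$ and its product of nonzero eigenvalues is $\tau(c)$. Then $|c| \ge m^{-[E:\mathbb{Q}]N}\, b^{-([E:\mathbb{Q}]-1)N}$. -/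
open scoped BigOperators Classical ComplexOrder

open Polynomial Matrix in
lemma my_eval_charpoly {n : Type*} [Fintype n] [DecidableEq n] (M : Matrix n n ℂ) (x : ℂ) :
    M.charpoly.eval x = (x • (1 : Matrix n n ℂ) - M).det := by
  rw [Matrix.charpoly, ← Polynomial.coe_evalRingHom, RingHom.map_det]
  congr 1
  ext i j
  by_cases h : i = j <;>
    simp [charmatrix_apply, h, Matrix.one_apply, Matrix.smul_apply]

open Polynomial Matrix in
lemma herm_charpoly_smul {n : Type*} [Fintype n] [DecidableEq n] {M : Matrix n n ℂ}
    (hM : M.IsHermitian) (t : ℝ) :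
    ((t : ℂ) • M).charpoly =
      ∏ i, (X - C ((t * hM.eigenvalues i : ℝ) : ℂ)) := by
  apply Polynomial.funext
  intro x
  rw [my_eval_charpoly]
  set U : Matrix n n ℂ := (hM.eigenvectorUnitary : Matrix n n ℂ) with hU
  set D : Matrix n n ℂ := Matrix.diagonal (RCLike.ofReal ∘ hM.eigenvalues) with hD
  have hUU : U * star U = 1 := (Matrix.mem_unitaryGroup_iff).mp hM.eigenvectorUnitary.2
  have hUU' : star U * U = 1 := (Matrix.mem_unitaryGroup_iff').mp hM.eigenvectorUnitary.2
  have hdiag : x • (1 : Matrix n n ℂ) - (t : ℂ) • D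
      = Matrix.diagonal (fun i => x - (t : ℂ) * (hM.eigenvalues i : ℂ)) := by
    ext i j
    by_cases h : i = j <;>
      simp [hD, Matrix.diagonal, h, Matrix.one_apply, Matrix.smul_apply, Function.comp]
  have key : U * (x • (1 : Matrix n n ℂ) - (t : ℂ) • D) * star U
      = x • (1 : Matrix n n ℂ) - (t : ℂ) • M := by
    conv_rhs => rw [hM.spectral_theorem, Unitary.conjStarAlgAut_apply]
    rw [Matrix.mul_sub, Matrix.sub_mul, Matrix.mul_smul, Matrix.smul_mul, Matrix.mul_smul,
      Matrix.smul_mul, Matrix.mul_one, hUU]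
  rw [← key, hdiag, Matrix.det_mul, Matrix.det_mul, mul_comm, ← mul_assoc, ← Matrix.det_mul,
    hUU', Matrix.det_one, one_mul]
  simp [Matrix.det_diagonal, Polynomial.eval_prod]

open Polynomial Matrix in
lemma prod_nonzero_eig_integral {N m : ℕ} {M : Matrix (Fin N) (Fin N) ℂ}
    (hM : M.IsHermitian)
    (hint : ∀ i j, IsIntegral ℤ ((m : ℂ) * M i j)) :
    IsIntegral ℤ ((m : ℂ) ^ N *
      ∏ i ∈ Finset.univ.filter (fun i => hM.eigenvalues i ≠ 0), (hM.eigenvalues i : ℂ)) := by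
  classical
  set S : Finset (Fin N) := Finset.univ.filter (fun i => hM.eigenvalues i ≠ 0) with hS
  set r : ℕ := S.card with hr
  have hrN : r ≤ N := by
    simpa using Finset.card_filter_le Finset.univ (fun i => hM.eigenvalues i ≠ 0)
  set B : Matrix (Fin N) (Fin N) ℂ := (m : ℂ) • M with hB
  have hcoeff : ∀ k, IsIntegral ℤ (B.charpoly.coeff k) := by
    intro k
    set R := integralClosure ℤ ℂ with hR
    set B₀ : Matrix (Fin N) (Fin N) R := fun i j => ⟨(m : ℂ) * M i j, hint i j⟩ with hB0
    have hmap : B = B₀.map (algebraMap R ℂ) := by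
      ext i j; rfl
    rw [hmap, Matrix.charpoly_map, Polynomial.coeff_map]
    exact (B₀.charpoly.coeff k).2
  have hfac := herm_charpoly_smul hM (m : ℝ)
  have hcard : (Finset.univ.filter (fun i => ¬ hM.eigenvalues i ≠ 0)).card = N - r := by
    have h := Finset.card_filter_add_card_filter_not
      (s := (Finset.univ : Finset (Fin N))) (p := fun i => hM.eigenvalues i ≠ 0)
    rw [← hS] at h
    simp only [Finset.card_univ, Fintype.card_fin] at h
    omega
  have hsplit : B.charpoly =
      (∏ i ∈ S, (X - C (((m : ℝ) * hM.eigenvalues i : ℝ) : ℂ))) * X ^ (N - r) := by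
    rw [hB, show ((m : ℕ) : ℂ) = (((m : ℕ) : ℝ) : ℂ) by push_cast; ring, hfac, ←
      Finset.prod_filter_mul_prod_filter_not Finset.univ (fun i => hM.eigenvalues i ≠ 0)]
    congr 1
    rw [Finset.prod_congr rfl (fun i hi => ?_), Finset.prod_const, hcard]
    simp only [Finset.mem_filter, not_not] at hi
    simp [hi.2]
  have hco : B.charpoly.coeff (N - r) =
      (-1 : ℂ) ^ r * ((m : ℂ) ^ r * ∏ i ∈ S, (hM.eigenvalues i : ℂ)) := by
    rw [hsplit]
    rw [Polynomial.coeff_mul_X_pow', if_pos le_rfl, Nat.sub_self, coeff_zero_eq_eval_zero,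
      Polynomial.eval_prod]
    simp only [Polynomial.eval_sub, Polynomial.eval_X, Polynomial.eval_C, zero_sub]
    rw [show (fun i => -(((m : ℝ) * hM.eigenvalues i : ℝ) : ℂ)) =
      fun i => (-1 : ℂ) * ((m : ℂ) * (hM.eigenvalues i : ℂ)) by funext i; push_cast; ring]
    rw [Finset.prod_mul_distrib, Finset.prod_const, Finset.prod_mul_distrib, Finset.prod_const]
  have key : (m : ℂ) ^ N * ∏ i ∈ S, (hM.eigenvalues i : ℂ) =
      (-1 : ℂ) ^ r * (m : ℂ) ^ (N - r) * B.charpoly.coeff (N - r) := by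
    rw [hco]
    have h1 : ((-1 : ℂ)^r) * ((-1 : ℂ)^r) = 1 := by
      rw [← pow_add, ← two_mul, pow_mul]; norm_num
    have h2 : (m : ℂ) ^ (N - r) * (m : ℂ) ^ r = (m : ℂ) ^ N := by
      rw [← pow_add, Nat.sub_add_cancel hrN]
    calc (m : ℂ) ^ N * ∏ i ∈ S, (hM.eigenvalues i : ℂ)
        = ((-1:ℂ)^r * (-1:ℂ)^r) * ((m:ℂ)^(N-r) * (m:ℂ)^r) * ∏ i ∈ S, (hM.eigenvalues i : ℂ) := by
          rw [h1, h2]; ring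
      _ = (-1 : ℂ) ^ r * (m : ℂ) ^ (N - r) *
            ((-1:ℂ)^r * ((m:ℂ)^r * ∏ i ∈ S, (hM.eigenvalues i : ℂ))) := by ring
  rw [key]
  apply IsIntegral.mul
  · apply IsIntegral.mul
    · exact (IsIntegral.neg isIntegral_one).pow r
    · have h : ((m : ℂ)) = algebraMap ℤ ℂ (m : ℤ) := by simp
      rw [h]
      exact isIntegral_algebraMap.pow _
  · exact hcoeff _

set_option maxHeartbeats 1000000 in
set_option synthInstance.maxHeartbeats 200000 in
/-- **Lower bound for the product of nonzero eigenvalues of an algebraic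
positive semidefinite matrix.**
Let `E ⊆ ℂ` be a finite Galois extension of `ℚ`, `A` an `N × N` matrix with
entries in `(1/m)·𝒪_E` (`m` a positive integer) which is Hermitian positive
semidefinite with all eigenvalues at most `b` (`b ≥ 1`), and suppose that for
every `τ ∈ Gal(E/ℚ)` the entrywise conjugate matrix `τ(A)` is also Hermitian
positive semidefinite with eigenvalues at most `b`, with product of nonzero
eigenvalues `τ(c)`, where `c ≠ 0` is the lowest nonzero coefficient of the
characteristic polynomial of `A` (the product of the nonzero eigenvalues of
`A`).  Then `|c| ≥ m^(-[E:ℚ]·N) · b^(-([E:ℚ]-1)·N)`. -/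
theorem lowest_charpoly_coefficient_bound
    (E : IntermediateField ℚ ℂ) [FiniteDimensional ℚ E] [IsGalois ℚ E]
    (N m : ℕ) (hm : 0 < m) (b : ℝ) (hb : 1 ≤ b)
    (A : Matrix (Fin N) (Fin N) E)
    (hint : ∀ i j, IsIntegral ℤ ((m : E) * A i j))
    (hpsd : ∀ τ : E ≃ₐ[ℚ] E,
      (A.map fun x => ((τ x : E) : ℂ)).PosSemidef)
    (hnorm : ∀ (τ : E ≃ₐ[ℚ] E) (i : Fin N), (hpsd τ).1.eigenvalues i ≤ b)
    (c : E) (hc0 : c ≠ 0)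
    (hτc : ∀ τ : E ≃ₐ[ℚ] E, ((τ c : E) : ℂ) =
      ∏ i ∈ Finset.univ.filter (fun i => (hpsd τ).1.eigenvalues i ≠ 0),
        ((hpsd τ).1.eigenvalues i : ℂ)) :
    ((m : ℝ) ^ (Module.finrank ℚ E * N))⁻¹ *
        (b ^ ((Module.finrank ℚ E - 1) * N))⁻¹ ≤ ‖(c : ℂ)‖ := by
  classical
  set d := Module.finrank ℚ E with hd
  have hcard : Fintype.card (E ≃ₐ[ℚ] E) = d := by rw [← Nat.card_eq_fintype_card]; exact IsGalois.card_aut_eq_finrank ℚ E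
  have hbpos : (0 : ℝ) < b := lt_of_lt_of_le one_pos hb
  -- the real product of nonzero eigenvalues for each τ
  set P : (E ≃ₐ[ℚ] E) → ℝ := fun τ =>
    ∏ i ∈ Finset.univ.filter (fun i => (hpsd τ).1.eigenvalues i ≠ 0), (hpsd τ).1.eigenvalues i
    with hP
  have hz : ∀ τ : E ≃ₐ[ℚ] E, ((τ c : E) : ℂ) = ((P τ : ℝ) : ℂ) := by
    intro τ
    rw [hτc τ, hP]
    push_cast
    rfl
  have hPpos : ∀ τ, 0 < P τ := by
    intro τ
    apply Finset.prod_pos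
    intro i hi
    simp only [Finset.mem_filter] at hi
    exact lt_of_le_of_ne ((hpsd τ).eigenvalues_nonneg i) (Ne.symm hi.2)
  have hPle : ∀ τ, P τ ≤ b ^ N := by
    intro τ
    calc P τ ≤ ∏ _i ∈ Finset.univ.filter (fun i => (hpsd τ).1.eigenvalues i ≠ 0), b :=
          Finset.prod_le_prod (fun i _ => (hpsd τ).eigenvalues_nonneg i) (fun i _ => hnorm τ i)
      _ = b ^ (Finset.univ.filter (fun i => (hpsd τ).1.eigenvalues i ≠ 0)).card :=
          Finset.prod_const b
      _ ≤ b ^ N := pow_le_pow_right₀ hb (by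
          simpa using Finset.card_filter_le Finset.univ
            (fun i => (hpsd τ).1.eigenvalues i ≠ 0))
  -- integrality of m^N * τ(c)
  have hz_int : ∀ τ : E ≃ₐ[ℚ] E, IsIntegral ℤ ((m : ℂ) ^ N * ((τ c : E) : ℂ)) := by
    intro τ
    rw [hτc τ]
    apply prod_nonzero_eig_integral (hpsd τ).1
    intro i j
    have h1 : IsIntegral ℤ (τ ((m : E) * A i j)) := (hint i j).map τ
    have h2 : IsIntegral ℤ (E.val (τ ((m : E) * A i j))) := h1.map E.val
    have h3 : (E.val (τ ((m : E) * A i j)) : ℂ)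
        = (m : ℂ) * (A.map fun x => ((τ x : E) : ℂ)) i j := by
      rw [map_mul, map_natCast, map_mul, map_natCast]
      rfl
    rwa [h3] at h2
  -- the Galois-fixed product
  set u : E := ∏ τ : E ≃ₐ[ℚ] E, τ c with hu
  have hufix : ∀ σ : E ≃ₐ[ℚ] E, σ u = u := by
    intro σ
    rw [hu, map_prod]
    exact Fintype.prod_equiv (Equiv.mulLeft σ) _ _ (fun τ => rfl)
  have hubot : u ∈ (⊥ : IntermediateField ℚ E) := by
    rw [← IsGalois.fixedField_fixingSubgroup (⊥ : IntermediateField ℚ E)]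
    exact fun g => hufix g.1
  obtain ⟨q, hq⟩ := IntermediateField.mem_bot.mp hubot
  have hune : u ≠ 0 := by
    rw [hu]
    exact Finset.prod_ne_zero_iff.mpr
      (fun τ _ h => hc0 (τ.injective (by simp [h])))
  have hq0 : q ≠ 0 := fun h => hune (by rw [← hq, h, map_zero])
  -- the rational number m^(dN) q is a nonzero integer
  have hWmap : algebraMap ℚ ℂ ((m : ℚ) ^ (d * N) * q)
      = ∏ τ : E ≃ₐ[ℚ] E, ((m : ℂ) ^ N * ((τ c : E) : ℂ)) := by
    rw [Finset.prod_mul_distrib, Finset.prod_const, map_mul]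
    congr 1
    · rw [Finset.card_univ, hcard, ← pow_mul, mul_comm N d]
      push_cast
      ring
    · have h4 : ∏ τ : E ≃ₐ[ℚ] E, ((τ c : E) : ℂ) = E.val u := by
        rw [hu, map_prod]
        rfl
      rw [h4, ← hq]
      exact (IsScalarTower.algebraMap_apply ℚ (↥E) ℂ q).symm
  have hWint : IsIntegral ℤ ((m : ℚ) ^ (d * N) * q) := by
    have hint' : IsIntegral ℤ (algebraMap ℚ ℂ ((m : ℚ) ^ (d * N) * q)) := by
      rw [hWmap]
      exact IsIntegral.prod _ (fun τ _ => hz_int τ)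
    have := (isIntegral_algHom_iff (IsScalarTower.toAlgHom ℤ ℚ ℂ)
      (algebraMap ℚ ℂ).injective (x := (m : ℚ) ^ (d * N) * q)).mp
    exact this hint'
  obtain ⟨z, hzq⟩ := IsIntegrallyClosed.isIntegral_iff.mp hWint
  have hzne : z ≠ 0 := by
    intro h
    rw [h] at hzq
    simp only [map_zero] at hzq
    have : q = 0 := by
      rcases mul_eq_zero.mp hzq.symm with h' | h'
      · exact absurd h' (by positivity)
      · exact h'
    exact hq0 this
  have h1le : (1 : ℚ) ≤ |(m : ℚ) ^ (d * N) * q| := by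
    rw [← hzq]
    have : (1 : ℤ) ≤ |z| := Int.one_le_abs hzne
    calc (1 : ℚ) ≤ (|z| : ℤ) := by exact_mod_cast this
      _ = |((z : ℤ) : ℚ)| := by push_cast; ring
  -- identify q with the product of the P τ
  set Q : ℝ := ∏ τ : E ≃ₐ[ℚ] E, P τ with hQ
  have hqQ : (q : ℝ) = Q := by
    have hc : ((q : ℝ) : ℂ) = ((Q : ℝ) : ℂ) := by
      have h5 : algebraMap ℚ ℂ q = ((q : ℝ) : ℂ) := by push_cast; rfl
      have h6 : ∏ τ : E ≃ₐ[ℚ] E, ((τ c : E) : ℂ) = ((Q : ℝ) : ℂ) := by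
        rw [hQ]
        push_cast
        exact Finset.prod_congr rfl (fun τ _ => hz τ)
      have h4 : ∏ τ : E ≃ₐ[ℚ] E, ((τ c : E) : ℂ) = E.val u := by
        rw [hu, map_prod]
        rfl
      rw [← h5, ← h6, h4, ← hq]
      exact (IsScalarTower.algebraMap_apply ℚ (↥E) ℂ q).symm
    exact_mod_cast hc
  have hQpos : 0 < Q := Finset.prod_pos (fun τ _ => hPpos τ)
  -- key inequality 1
  have key1 : (1 : ℝ) ≤ (m : ℝ) ^ (d * N) * Q := by
    have := h1le
    rw [abs_mul, abs_of_nonneg (by positivity : (0:ℚ) ≤ (m : ℚ) ^ (d * N))] at this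
    have h7 : (1 : ℝ) ≤ (m : ℝ) ^ (d * N) * |(q : ℝ)| := by exact_mod_cast this
    rwa [hqQ, abs_of_pos hQpos] at h7
  -- key inequality 2
  have key2 : Q ≤ P 1 * b ^ ((d - 1) * N) := by
    have hsplitQ : Q = P 1 * ∏ τ ∈ Finset.univ.erase 1, P τ :=
      (Finset.mul_prod_erase Finset.univ P (Finset.mem_univ (1 : ↥E ≃ₐ[ℚ] ↥E))).symm
    have hcarde : (Finset.univ.erase (1 : E ≃ₐ[ℚ] E)).card = d - 1 := by
      rw [Finset.card_erase_of_mem (Finset.mem_univ 1), Finset.card_univ, hcard]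
    have hprod_le : ∏ τ ∈ Finset.univ.erase 1, P τ ≤ b ^ ((d - 1) * N) := by
      calc ∏ τ ∈ Finset.univ.erase 1, P τ
          ≤ ∏ _τ ∈ Finset.univ.erase (1 : E ≃ₐ[ℚ] E), b ^ N :=
            Finset.prod_le_prod (fun τ _ => (hPpos τ).le) (fun τ _ => hPle τ)
        _ = (b ^ N) ^ (d - 1) := by rw [Finset.prod_const, hcarde]
        _ = b ^ ((d - 1) * N) := by rw [← pow_mul, mul_comm N (d - 1)]
    rw [hsplitQ]
    exact mul_le_mul_of_nonneg_left hprod_le (hPpos 1).le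
  -- conclude
  have habs : ‖(c : ℂ)‖ = P 1 := by
    have h8 : ((c : E) : ℂ) = ((P 1 : ℝ) : ℂ) := by
      have := hz 1
      rwa [AlgEquiv.one_apply] at this
    rw [h8, Complex.norm_real, Real.norm_eq_abs, abs_of_pos (hPpos 1)]
  rw [habs]
  have hfin : (1 : ℝ) ≤ P 1 * ((m : ℝ) ^ (d * N) * b ^ ((d - 1) * N)) := by
    calc (1 : ℝ) ≤ (m : ℝ) ^ (d * N) * Q := key1
      _ ≤ (m : ℝ) ^ (d * N) * (P 1 * b ^ ((d - 1) * N)) := by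
          apply mul_le_mul_of_nonneg_left key2 (by positivity)
      _ = P 1 * ((m : ℝ) ^ (d * N) * b ^ ((d - 1) * N)) := by ring
  have hpos : (0 : ℝ) < (m : ℝ) ^ (d * N) * b ^ ((d - 1) * N) := by positivity
  rw [show ((m : ℝ) ^ (d * N))⁻¹ * (b ^ ((d - 1) * N))⁻¹
      = 1 / ((m : ℝ) ^ (d * N) * b ^ ((d - 1) * N)) by rw [one_div, mul_inv]]
  rw [div_le_iff₀ hpos]
  linarith
end

section
/- Let $\Gamma$ be a group and $g \in \Gamma$ an element with infinite conjugacy class, and let $(N_n)_n$ be a descending chain of finite index normal subgroups of $\Gamma$ with trivial intersection. Then $\lim_{n\to\infty} \frac{|C_{\Gamma/N_n}(gN_n)|}{|\Gamma : N_n|} = 0$. -/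
open Filter

/-- **Vanishing of normalized centralizers along a chain.**
Let `Γ` be a group and `g ∈ Γ` an element with infinite conjugacy class, and
let `(N n)` be a descending chain of finite index normal subgroups of `Γ`
with trivial intersection.  Then
`|C_{Γ/Nₙ}(g Nₙ)| / |Γ : Nₙ| → 0` as `n → ∞`. -/
theorem centralizer_quotient_vanishing {Γ : Type*} [Group Γ] (g : Γ)
    (hg : Set.Infinite {x : Γ | IsConj g x})
    (N : ℕ → Subgroup Γ) [hnorm : ∀ n, (N n).Normal]
    (hfi : ∀ n, (N n).index ≠ 0)
    (hdesc : ∀ n, N (n + 1) ≤ N n)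
    (hint : (⨅ n, N n) = ⊥) :
    Tendsto (fun n =>
        (Nat.card (Subgroup.centralizer {(g : Γ ⧸ N n)} : Subgroup (Γ ⧸ N n)) : ℝ)
          / ((N n).index : ℝ))
      atTop (nhds 0) := by
  classical
  have hant : Antitone N := antitone_nat_of_succ_le hdesc
  -- the conjugacy class of the image of g in the quotient
  set S : ∀ n, Set (Γ ⧸ N n) := fun n => {x | IsConj (↑g) x} with hS
  have hfin : ∀ n, Finite (Γ ⧸ N n) := by
    intro n
    have := hfi n
    rw [Subgroup.index_eq_card] at this
    exact Nat.finite_of_card_ne_zero this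
  -- orbit-stabilizer: card S n * card centralizer = index
  have hkey : ∀ n, Nat.card (S n) *
      Nat.card (Subgroup.centralizer {(g : Γ ⧸ N n)} : Subgroup (Γ ⧸ N n)) = (N n).index := by
    intro n
    haveI := hfin n
    rw [Subgroup.nat_card_centralizer_nat_card_stabilizer, Subgroup.index_eq_card]
    have horb : S n = MulAction.orbit (ConjAct (Γ ⧸ N n)) (↑g : Γ ⧸ N n) := by
      ext x
      rw [ConjAct.mem_orbit_conjAct]
      exact isConj_comm
    rw [horb]
    have := Nat.card_congr (MulAction.orbitProdStabilizerEquivGroup (ConjAct (Γ ⧸ N n))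
      (↑g : Γ ⧸ N n))
    rw [Nat.card_prod] at this
    exact this
  have hcentpos : ∀ n,
      0 < Nat.card (Subgroup.centralizer {(g : Γ ⧸ N n)} : Subgroup (Γ ⧸ N n)) := by
    intro n
    haveI := hfin n
    exact Nat.card_pos
  -- card S n tends to infinity
  have hStop : Tendsto (fun n => Nat.card (S n)) atTop atTop := by
    rw [tendsto_atTop_atTop]
    intro k
    obtain ⟨t, hts, htk⟩ := hg.exists_subset_card_eq k
    -- eventually all nontrivial differences escape N n
    have hev : ∀ᶠ n in atTop, ∀ a ∈ t, ∀ b ∈ t, a ≠ b → a⁻¹ * b ∉ N n := by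
      rw [eventually_all_finset]
      intro a _
      rw [eventually_all_finset]
      intro b _
      rcases eq_or_ne a b with rfl | hab
      · exact Eventually.of_forall fun _ h => absurd rfl h
      · have hne : a⁻¹ * b ≠ 1 := fun h => hab (inv_mul_eq_one.mp h)
        have : ∃ m, a⁻¹ * b ∉ N m := by
          by_contra h
          push_neg at h
          have : a⁻¹ * b ∈ (⨅ n, N n) := Subgroup.mem_iInf.mpr h
          rw [hint, Subgroup.mem_bot] at this
          exact hne this
        obtain ⟨m, hm⟩ := this
        exact eventually_atTop.mpr ⟨m, fun n hn _ hmem => hm (hant hn hmem)⟩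
    obtain ⟨M, hM⟩ := eventually_atTop.mp hev
    refine ⟨M, fun n hn => ?_⟩
    have hMn := hM n hn
    haveI := hfin n
    -- the image of t in the quotient is injective and lands in S n
    have hinj : Set.InjOn (QuotientGroup.mk : Γ → Γ ⧸ N n) ↑t := by
      intro a ha b hb hab
      by_contra hne
      exact hMn a ha b hb hne (QuotientGroup.eq.mp hab)
    have himage : ↑(t.image (QuotientGroup.mk : Γ → Γ ⧸ N n)) ⊆ S n := by
      intro x hx
      simp only [Finset.coe_image, Set.mem_image, Finset.mem_coe] at hx
      obtain ⟨a, hat, rfl⟩ := hx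
      exact (QuotientGroup.mk' (N n)).map_isConj (hts hat)
    calc k = (t.image (QuotientGroup.mk : Γ → Γ ⧸ N n)).card := by
            rw [Finset.card_image_of_injOn hinj, htk]
      _ = (↑(t.image (QuotientGroup.mk : Γ → Γ ⧸ N n)) : Set (Γ ⧸ N n)).ncard := by
            rw [Set.ncard_coe_finset]
      _ ≤ (S n).ncard := Set.ncard_le_ncard himage (Set.toFinite _)
      _ = Nat.card (S n) := Nat.card_coe_set_eq (S n) ▸ rfl
  -- conclude
  have heq : ∀ n,
      (Nat.card (Subgroup.centralizer {(g : Γ ⧸ N n)} : Subgroup (Γ ⧸ N n)) : ℝ)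
        / ((N n).index : ℝ) = 1 / (Nat.card (S n) : ℝ) := by
    intro n
    rw [← hkey n]
    push_cast
    rw [div_mul_eq_div_div_swap, div_self (by exact_mod_cast (hcentpos n).ne')]
  refine Tendsto.congr (fun n => (heq n).symm) ?_
  exact tendsto_one_div_atTop_nhds_zero_nat.comp hStop
end
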